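/- For every L > 0, every s ≥ 0 and all k, n ∈ ℕ: ∫_{C_n(L) + s + k} (r^k/k!) e^{-r} dr ≤ ∫_{C_n(L)} e^{-r} dr, where C_n(L) + s + k denotes the translate {x + s + k : x ∈ C_n(L)}. -/

import Mathlib

open Real MeasureTheory

/-- The `n`-iterate mid-third Cantor set based in `[0, L]`:
`C₀(L) = [0,L]` and `C_{n+1}(L) = (1/3)·C_n(L) ∪ (2L/3 + (1/3)·C_n(L))`. -/
def cantorIterate : ℕ → ℝ → Set ℝ
  | 0, L => Set.Icc 0 L
  | n + 1, L =>
      (fun x => x / 3) '' cantorIterate n L ∪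
        (fun x => 2 * L / 3 + x / 3) '' cantorIterate n L

open Set
open scoped ENNReal

lemma cantor_subset : ∀ (n : ℕ) (L : ℝ), 0 ≤ L → cantorIterate n L ⊆ Set.Icc 0 L := by
  intro n
  induction n with
  | zero => intro L _; exact subset_rfl
  | succ n ih =>
    intro L hL
    rintro x (⟨y, hy, rfl⟩ | ⟨y, hy, rfl⟩) <;>
    · have h1 := (ih L hL hy).1
      have h2 := (ih L hL hy).2
      constructor <;> [linarith; linarith]

lemma cantor_measurable : ∀ (n : ℕ) (L : ℝ), MeasurableSet (cantorIterate n L) := by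
  intro n
  induction n with
  | zero => intro L; exact measurableSet_Icc
  | succ n ih =>
    intro L
    have h1 : (fun x : ℝ => x / 3) '' cantorIterate n L
        = (fun x : ℝ => 3 * x) ⁻¹' cantorIterate n L := by
      ext x
      constructor
      · rintro ⟨y, hy, rfl⟩
        show 3 * (y / 3) ∈ cantorIterate n L
        have h : 3 * (y / 3) = y := by ring
        rw [h]; exact hy
      · intro hx; exact ⟨3 * x, hx, by ring⟩
    have h2 : (fun x : ℝ => 2 * L / 3 + x / 3) '' cantorIterate n L
        = (fun x : ℝ => 3 * (x - 2 * L / 3)) ⁻¹' cantorIterate n L := by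
      ext x
      constructor
      · rintro ⟨y, hy, rfl⟩
        show 3 * (2 * L / 3 + y / 3 - 2 * L / 3) ∈ cantorIterate n L
        have h : 3 * (2 * L / 3 + y / 3 - 2 * L / 3) = y := by ring
        rw [h]; exact hy
      · intro hx; exact ⟨3 * (x - 2 * L / 3), hx, by ring⟩
    rw [cantorIterate, h1, h2]
    exact ((ih L).preimage (by fun_prop)).union ((ih L).preimage (by fun_prop))

lemma cantor_third : ∀ (n : ℕ) (L : ℝ),
    cantorIterate n (L / 3) = (fun x : ℝ => x / 3) '' cantorIterate n L := by
  intro n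
  induction n with
  | zero =>
    intro L
    ext x
    simp only [cantorIterate, mem_Icc, mem_image]
    constructor
    · rintro ⟨h1, h2⟩; exact ⟨3 * x, ⟨by linarith, by linarith⟩, by ring⟩
    · rintro ⟨y, ⟨h1, h2⟩, rfl⟩; exact ⟨by linarith, by linarith⟩
  | succ n ih =>
    intro L
    simp only [cantorIterate, ih L, Set.image_union, Set.image_image]
    congr 1
    apply Set.image_congr'; intro x; ring

lemma cantor_succ (n : ℕ) (L : ℝ) :
    cantorIterate (n + 1) L
      = cantorIterate n (L / 3) ∪ (fun x : ℝ => 2 * L / 3 + x) '' cantorIterate n (L / 3) := by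
  rw [cantor_third n L, cantorIterate, Set.image_image]

noncomputable def II (n : ℕ) (L t : ℝ) : ℝ :=
  ∫ x in cantorIterate n L ∩ Set.Ici t, Real.exp (-x)

lemma II_meas (n : ℕ) (L t : ℝ) : MeasurableSet (cantorIterate n L ∩ Set.Ici t) :=
  (cantor_measurable n L).inter measurableSet_Ici

lemma integrableOn_sub (L : ℝ) {A : Set ℝ} (hA : A ⊆ Set.Icc 0 L) (f : ℝ → ℝ)
    (hf : Continuous f) : IntegrableOn f A volume :=
  (hf.integrableOn_Icc (a := 0) (b := L)).mono_set hA

lemma II_nonneg (n : ℕ) (L t : ℝ) : 0 ≤ II n L t :=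
  setIntegral_nonneg (II_meas n L t) (fun x _ => (Real.exp_pos _).le)

lemma II_of_nonpos (n : ℕ) (L : ℝ) (hL : 0 ≤ L) {t : ℝ} (ht : t ≤ 0) :
    II n L t = II n L 0 := by
  unfold II
  rw [Set.inter_eq_left.2 (fun x hx => Set.mem_Ici.2 ((cantor_subset n L hL hx).1)),
    Set.inter_eq_left.2 (fun x hx => Set.mem_Ici.2 (le_trans ht (cantor_subset n L hL hx).1))]

lemma II_eq_zero (n : ℕ) (L : ℝ) (hL : 0 ≤ L) {t : ℝ} (ht : L ≤ t) : II n L t = 0 := by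
  have hnull : volume (cantorIterate n L ∩ Set.Ici t) = 0 := by
    apply measure_mono_null
      (show _ ⊆ Set.Icc t L from fun x hx => ⟨hx.2, (cantor_subset n L hL hx.1).2⟩)
    rw [Real.volume_Icc]
    simp only [ENNReal.ofReal_eq_zero]
    linarith
  unfold II
  rw [Measure.restrict_eq_zero.2 hnull, integral_zero_measure]

lemma II_zero_formula (n : ℕ) (L : ℝ) (hL : 0 ≤ L) :
    II n L 0 = ∫ x in cantorIterate n L, Real.exp (-x) := by
  unfold II
  rw [Set.inter_eq_left.2 (fun x hx => Set.mem_Ici.2 ((cantor_subset n L hL hx).1))]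

lemma II_base (L t : ℝ) (h0 : 0 ≤ t) (htL : t ≤ L) :
    II 0 L t = Real.exp (-t) - Real.exp (-L) := by
  unfold II
  have hset : cantorIterate 0 L ∩ Set.Ici t = Set.Icc t L := by
    ext x
    simp only [cantorIterate, Set.mem_inter_iff, Set.mem_Icc, Set.mem_Ici]
    constructor
    · rintro ⟨⟨_, h2⟩, h3⟩; exact ⟨h3, h2⟩
    · rintro ⟨h1, h2⟩; exact ⟨⟨le_trans h0 h1, h2⟩, h1⟩
  rw [hset, MeasureTheory.integral_Icc_eq_integral_Ioc,
    ← intervalIntegral.integral_of_le htL, intervalIntegral.integral_comp_neg fun x => Real.exp x]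
  rw [integral_exp]

lemma II_rec (n : ℕ) (L : ℝ) (hL : 0 < L) (t : ℝ) :
    II (n + 1) L t
      = II n (L / 3) t + Real.exp (-(2 * L / 3)) * II n (L / 3) (t - 2 * L / 3) := by
  have hL3 : (0:ℝ) ≤ L / 3 := by linarith
  have hsub := cantor_subset n (L / 3) hL3
  unfold II
  rw [cantor_succ n L, Set.union_inter_distrib_right]
  have himg : ((fun x : ℝ => 2 * L / 3 + x) '' cantorIterate n (L / 3)) ∩ Set.Ici t
      = (fun x : ℝ => 2 * L / 3 + x) '' (cantorIterate n (L / 3) ∩ Set.Ici (t - 2 * L / 3)) := by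
    ext x
    simp only [Set.mem_inter_iff, Set.mem_image, Set.mem_Ici]
    constructor
    · rintro ⟨⟨y, hy, rfl⟩, hx⟩; exact ⟨y, ⟨hy, by linarith⟩, rfl⟩
    · rintro ⟨y, ⟨hy, hy2⟩, rfl⟩; exact ⟨⟨y, hy, rfl⟩, by linarith⟩
  rw [himg]
  have hdisj : Disjoint (cantorIterate n (L / 3) ∩ Set.Ici t)
      ((fun x : ℝ => 2 * L / 3 + x) '' (cantorIterate n (L / 3) ∩ Set.Ici (t - 2 * L / 3))) := by
    rw [Set.disjoint_left]
    rintro x ⟨hx1, _⟩ ⟨y, ⟨hy, _⟩, rfl⟩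
    have h1 := (hsub hx1).2
    have h2 := (hsub hy).1
    linarith
  have hmeas2 : MeasurableSet
      ((fun x : ℝ => 2 * L / 3 + x) '' (cantorIterate n (L / 3) ∩ Set.Ici (t - 2 * L / 3))) := by
    have : (fun x : ℝ => 2 * L / 3 + x) '' (cantorIterate n (L / 3) ∩ Set.Ici (t - 2 * L / 3))
        = (fun x : ℝ => x - 2 * L / 3) ⁻¹' (cantorIterate n (L / 3) ∩ Set.Ici (t - 2 * L / 3)) := by
      ext x
      constructor
      · rintro ⟨y, hy, rfl⟩
        refine Set.mem_preimage.2 ?_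
        simpa using hy
      · intro hx; exact ⟨x - 2 * L / 3, Set.mem_preimage.1 hx, by ring⟩
    rw [this]
    exact ((cantor_measurable n (L/3)).inter measurableSet_Ici).preimage (by fun_prop)
  have hsub2 : (fun x : ℝ => 2 * L / 3 + x) '' (cantorIterate n (L / 3) ∩ Set.Ici (t - 2 * L / 3))
      ⊆ Set.Icc 0 L := by
    rintro x ⟨y, ⟨hy, _⟩, rfl⟩
    have h1 := (hsub hy).1
    have h2 := (hsub hy).2
    exact ⟨by linarith, by linarith⟩
  rw [MeasureTheory.setIntegral_union hdisj hmeas2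
    (integrableOn_sub (L/3) (fun x hx => hsub hx.1) _ (by fun_prop))
    (integrableOn_sub L hsub2 _ (by fun_prop))]
  congr 1
  have hmp : MeasurePreserving (fun x : ℝ => 2 * L / 3 + x) volume volume :=
    measurePreserving_add_left volume (2 * L / 3)
  have hemb : MeasurableEmbedding (fun x : ℝ => 2 * L / 3 + x) :=
    (MeasurableEquiv.addLeft (2 * L / 3)).measurableEmbedding
  rw [hmp.setIntegral_image_emb hemb]
  simp_rw [neg_add, Real.exp_add, integral_const_mul]

lemma exp_pow_eq (c : ℝ) (m : ℕ) : Real.exp (-c) ^ m = Real.exp (-(m * c)) := by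
  rw [← Real.exp_nat_mul]
  ring_nf

theorem K_ind : ∀ (n : ℕ) (L t : ℝ), 0 < L → 0 ≤ t → t ≤ L →
    (1 - Real.exp (-(2 * L))) * II n L t
      ≤ (Real.exp (-t) - Real.exp (-(2 * L))) * II n L 0 := by
  intro n
  induction n with
  | zero =>
    intro L t hL ht htL
    rw [II_base L t ht htL, II_base L 0 le_rfl hL.le]
    set u := Real.exp (-L) with hu
    set x := Real.exp (-t) with hx
    have hu2 : Real.exp (-(2 * L)) = u ^ 2 := by rw [exp_pow_eq]; norm_num
    have hu1 : u < 1 := Real.exp_lt_one_iff.2 (by linarith)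
    have hu0 : 0 < u := Real.exp_pos _
    have hx1 : x ≤ 1 := Real.exp_le_one_iff.2 (by linarith)
    have hux : u ≤ x := Real.exp_le_exp.2 (by linarith)
    rw [hu2, show Real.exp (-(0:ℝ)) = 1 by simp]
    linarith [mul_nonneg (mul_nonneg hu0.le (sub_nonneg.2 hx1)) (sub_nonneg.2 hu1.le)]
  | succ n ih =>
    intro L t hL ht htL
    have hL3 : 0 < L / 3 := by linarith
    set b := Real.exp (-(L / 3)) with hb
    have hb0 : 0 < b := Real.exp_pos _
    have hb1 : b < 1 := Real.exp_lt_one_iff.2 (by linarith)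
    have h2L3 : Real.exp (-(2 * L / 3)) = b ^ 2 := by
      rw [exp_pow_eq]; norm_num; ring_nf
    have h2L : Real.exp (-(2 * L)) = b ^ 6 := by
      rw [exp_pow_eq]; norm_num; ring_nf
    have hL' : Real.exp (-L) = b ^ 3 := by
      rw [exp_pow_eq]; norm_num; ring_nf
    set x := Real.exp (-t) with hx
    have hx1 : x ≤ 1 := Real.exp_le_one_iff.2 (by linarith)
    have hx0 : 0 < x := Real.exp_pos _
    have hb61 : b ^ 6 ≤ 1 := pow_le_one₀ hb0.le hb1.le
    have hb64 : b ^ 6 ≤ b ^ 4 := pow_le_pow_of_le_one hb0.le hb1.le (by norm_num)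
    have hb42 : b ^ 4 ≤ b ^ 2 := pow_le_pow_of_le_one hb0.le hb1.le (by norm_num)
    have hb21 : (0:ℝ) < 1 - b ^ 2 := by nlinarith [mul_pos (sub_pos.2 hb1) (show (0:ℝ) < 1 + b by linarith)]
    have hJ0 : 0 ≤ II n (L / 3) 0 := II_nonneg n (L / 3) 0
    have hrec := II_rec n L hL t
    have hrec0 := II_rec n L hL 0
    rw [II_of_nonpos n (L / 3) hL3.le (by linarith : (0:ℝ) - 2 * L / 3 ≤ 0)] at hrec0
    set J0 := II n (L / 3) 0 with hJ
    rw [hrec, hrec0, h2L3, h2L]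
    rcases le_or_gt t (L / 3) with hc1 | hc1
    · -- left piece, t ≤ L/3
      rw [II_of_nonpos n (L / 3) hL3.le (by linarith : t - 2 * L / 3 ≤ 0)]
      have hIH := ih (L / 3) t hL3 ht hc1
      rw [show (2 * (L / 3) : ℝ) = 2 * L / 3 by ring, h2L3] at hIH
      set It := II n (L / 3) t with hIt
      have hIt0 : 0 ≤ It := II_nonneg n (L / 3) t
      have m1 : (1 - b ^ 6) * ((1 - b ^ 2) * It) ≤ (1 - b ^ 6) * ((x - b ^ 2) * J0) :=
        mul_le_mul_of_nonneg_left hIH (by linarith)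
      have m2 : 0 ≤ J0 * (1 - x) * (b ^ 4 - b ^ 6) :=
        mul_nonneg (mul_nonneg hJ0 (by linarith)) (by linarith)
      have key : (1 - b ^ 2) * ((1 - b ^ 6) * (It + b ^ 2 * J0))
          ≤ (1 - b ^ 2) * ((x - b ^ 6) * (J0 + b ^ 2 * J0)) := by linarith [m1, m2]
      exact le_of_mul_le_mul_left key hb21
    rcases le_or_gt t (2 * L / 3) with hc2 | hc2
    · -- middle piece
      rw [II_eq_zero n (L / 3) hL3.le hc1.le,
        II_of_nonpos n (L / 3) hL3.le (by linarith : t - 2 * L / 3 ≤ 0)]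
      have hxb2 : b ^ 2 ≤ x := by
        rw [hx, ← h2L3]; exact Real.exp_le_exp.2 (by linarith)
      linarith [mul_nonneg hJ0 (sub_nonneg.2 hxb2),
        mul_nonneg (mul_nonneg hJ0 (sq_nonneg b)) (sub_nonneg.2 (le_trans hb42 hxb2))]
    · -- right piece
      rw [II_eq_zero n (L / 3) hL3.le hc1.le]
      have hu0 : 0 ≤ t - 2 * L / 3 := by linarith
      have huL : t - 2 * L / 3 ≤ L / 3 := by linarith
      have hIH := ih (L / 3) (t - 2 * L / 3) hL3 hu0 huL
      rw [show (2 * (L / 3) : ℝ) = 2 * L / 3 by ring, h2L3] at hIH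
      set y := Real.exp (-(t - 2 * L / 3)) with hy
      have hxy : y * b ^ 2 = x := by
        rw [hy, hx, h2L3.symm, ← Real.exp_add]; ring_nf
      have hy1 : y ≤ 1 := Real.exp_le_one_iff.2 (by linarith)
      have hy0 : 0 < y := Real.exp_pos _
      set Iu := II n (L / 3) (t - 2 * L / 3) with hIu
      have hIu0 : 0 ≤ Iu := II_nonneg n (L / 3) (t - 2 * L / 3)
      have hIH2 : ((1 - b ^ 2) * Iu) * b ^ 2 ≤ ((y - b ^ 2) * J0) * b ^ 2 :=
        mul_le_mul_of_nonneg_right hIH (sq_nonneg b)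
      have hIH3 : ((y - b ^ 2) * J0) * b ^ 2 = (x - b ^ 4) * J0 := by
        rw [← hxy]; ring
      rw [hIH3] at hIH2
      have m1 : (1 - b ^ 6) * (((1 - b ^ 2) * Iu) * b ^ 2) ≤ (1 - b ^ 6) * ((x - b ^ 4) * J0) :=
        mul_le_mul_of_nonneg_left hIH2 (by linarith)
      have m2 : 0 ≤ J0 * (1 - x) * (b ^ 4 - b ^ 6) :=
        mul_nonneg (mul_nonneg hJ0 (by linarith)) (by linarith)
      have key : (1 - b ^ 2) * ((1 - b ^ 6) * (0 + b ^ 2 * Iu))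
          ≤ (1 - b ^ 2) * ((x - b ^ 6) * (J0 + b ^ 2 * J0)) := by linarith [m1, m2]
      exact le_of_mul_le_mul_left key hb21

theorem II_tail_le (n : ℕ) (L : ℝ) (hL : 0 < L) {t : ℝ} (ht : 0 ≤ t) :
    II n L t ≤ Real.exp (-t) * II n L 0 := by
  rcases le_or_gt t L with htL | htL
  · have hK := K_ind n L t hL ht htL
    have hB1 : Real.exp (-(2 * L)) < 1 := Real.exp_lt_one_iff.2 (by linarith)
    have hB0 : 0 < Real.exp (-(2 * L)) := Real.exp_pos _
    have hx1 : Real.exp (-t) ≤ 1 := Real.exp_le_one_iff.2 (by linarith)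
    have h0 : 0 ≤ II n L 0 := II_nonneg n L 0
    have hB2 : 0 < 1 - Real.exp (-(2 * L)) := by linarith
    nlinarith [II_nonneg n L t, mul_nonneg (mul_nonneg h0 hB0.le) (sub_nonneg.2 hx1)]
  · rw [II_eq_zero n L hL.le htL.le]
    exact mul_nonneg (Real.exp_nonneg _) (II_nonneg n L 0)

theorem moment_bound (n : ℕ) (L : ℝ) (hL : 0 < L) (j : ℕ) :
    ∫ x in cantorIterate n L, x ^ j * Real.exp (-x)
      ≤ (j.factorial : ℝ) * II n L 0 := by
  have hCm := cantor_measurable n L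
  have hsub := cantor_subset n L hL.le
  have hII0 : II n L 0 = ∫ x in cantorIterate n L, Real.exp (-x) := by
    unfold II
    rw [Set.inter_eq_left.2 (fun x hx => Set.mem_Ici.2 ((hsub hx).1))]
  rcases Nat.eq_zero_or_pos j with rfl | hj
  · simp only [pow_zero, one_mul, Nat.factorial_zero, Nat.cast_one, hII0, le_refl]
  have hjR : (0:ℝ) < (j:ℝ) := by exact_mod_cast hj
  set C := cantorIterate n L with hC
  set dens : ℝ → ℝ≥0∞ := fun x => ENNReal.ofReal (Real.exp (-x)) with hdens
  have hdens_m : Measurable dens := by fun_prop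
  set μ : Measure ℝ := (volume.withDensity dens).restrict C with hμ
  set f : ℝ → ℝ := fun x => max x 0 with hf
  have f_nn : 0 ≤ᵐ[μ] f := Filter.Eventually.of_forall fun x => le_max_right _ _
  have f_mble : AEMeasurable f μ := (measurable_id.max measurable_const).aemeasurable
  have key := lintegral_rpow_eq_lintegral_meas_le_mul μ f_nn f_mble hjR
  -- rewrite the left side
  have hrw : μ = (volume.restrict C).withDensity dens := restrict_withDensity hCm dens
  have hInt : IntegrableOn (fun x => x ^ j * Real.exp (-x)) C volume :=
    integrableOn_sub L hsub _ (by fun_prop)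
  have hlhs : ∫⁻ ω, ENNReal.ofReal (f ω ^ (j:ℝ)) ∂μ
      = ENNReal.ofReal (∫ x in C, x ^ j * Real.exp (-x)) := by
    rw [hrw, lintegral_withDensity_eq_lintegral_mul _ hdens_m (by fun_prop),
      ofReal_integral_eq_lintegral_ofReal hInt
        ((ae_restrict_mem hCm).mono fun x hx =>
          mul_nonneg (pow_nonneg (hsub hx).1 _) (Real.exp_nonneg _))]
    apply lintegral_congr_ae
    filter_upwards [ae_restrict_mem hCm] with x hx
    have hx0 : (0:ℝ) ≤ x := (hsub hx).1
    simp only [hdens, hf, Pi.mul_apply]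
    rw [max_eq_left hx0, Real.rpow_natCast, ← ENNReal.ofReal_mul (Real.exp_nonneg _)]
    congr 1
    ring
  -- bound the right side
  have hmu_le : ∀ t : ℝ, 0 < t →
      μ {a : ℝ | t ≤ f a} ≤ ENNReal.ofReal (Real.exp (-t) * II n L 0) := by
    intro t ht
    have hset : {a : ℝ | t ≤ f a} = Set.Ici t := by
      ext a
      simp only [hf, Set.mem_setOf_eq, Set.mem_Ici, le_max_iff]
      constructor
      · rintro (h | h); · exact h
        · linarith
      · exact fun h => Or.inl h
    rw [hset, hrw, withDensity_apply _ measurableSet_Ici,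
      Measure.restrict_restrict measurableSet_Ici]
    have : ∫⁻ x in Set.Ici t ∩ C, dens x ∂volume = ENNReal.ofReal (II n L t) := by
      rw [Set.inter_comm]
      unfold II
      rw [ofReal_integral_eq_lintegral_ofReal
        ((integrableOn_sub L (fun x hx => hsub hx.1) _ (by fun_prop)))
        (Filter.Eventually.of_forall fun x => Real.exp_nonneg _)]
    rw [this]
    exact ENNReal.ofReal_le_ofReal (II_tail_le n L hL ht.le)
  have hgamma : ∫⁻ t in Set.Ioi (0:ℝ), ENNReal.ofReal (Real.exp (-t) * t ^ ((j:ℝ) - 1))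
      = ENNReal.ofReal (Real.Gamma j) := by
    rw [Real.Gamma_eq_integral hjR,
      ofReal_integral_eq_lintegral_ofReal (Real.GammaIntegral_convergent hjR)
        ((ae_restrict_mem measurableSet_Ioi).mono fun t ht =>
          mul_nonneg (Real.exp_nonneg _) (Real.rpow_nonneg (le_of_lt ht) _))]
  have hII00 : 0 ≤ II n L 0 := II_nonneg n L 0
  have hrhs : ENNReal.ofReal (j:ℝ) * ∫⁻ t in Set.Ioi 0,
        μ {a : ℝ | t ≤ f a} * ENNReal.ofReal (t ^ ((j:ℝ) - 1))
      ≤ ENNReal.ofReal ((j:ℝ) * Real.Gamma j * II n L 0) := by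
    have hmono : ∫⁻ t in Set.Ioi 0, μ {a : ℝ | t ≤ f a} * ENNReal.ofReal (t ^ ((j:ℝ) - 1))
        ≤ ∫⁻ t in Set.Ioi 0,
            ENNReal.ofReal (II n L 0) * ENNReal.ofReal (Real.exp (-t) * t ^ ((j:ℝ) - 1)) := by
      apply setLIntegral_mono_ae' measurableSet_Ioi
      apply Filter.Eventually.of_forall
      intro t ht
      have h1 : μ {a : ℝ | t ≤ f a} * ENNReal.ofReal (t ^ ((j:ℝ) - 1))
          ≤ ENNReal.ofReal (Real.exp (-t) * II n L 0) * ENNReal.ofReal (t ^ ((j:ℝ) - 1)) :=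
        mul_le_mul_left (hmu_le t ht) _
      refine h1.trans (le_of_eq ?_)
      rw [← ENNReal.ofReal_mul (by positivity), ← ENNReal.ofReal_mul hII00]
      congr 1
      ring
    calc ENNReal.ofReal (j:ℝ) * ∫⁻ t in Set.Ioi 0,
          μ {a : ℝ | t ≤ f a} * ENNReal.ofReal (t ^ ((j:ℝ) - 1))
        ≤ ENNReal.ofReal (j:ℝ) * ∫⁻ t in Set.Ioi 0,
            ENNReal.ofReal (II n L 0) * ENNReal.ofReal (Real.exp (-t) * t ^ ((j:ℝ) - 1)) :=
          mul_le_mul_right hmono _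
      _ = ENNReal.ofReal (j:ℝ) * (ENNReal.ofReal (II n L 0)
            * ∫⁻ t in Set.Ioi 0, ENNReal.ofReal (Real.exp (-t) * t ^ ((j:ℝ) - 1))) := by
          rw [lintegral_const_mul' _ _ ENNReal.ofReal_ne_top]
      _ = ENNReal.ofReal ((j:ℝ) * Real.Gamma j * II n L 0) := by
          rw [hgamma, ← ENNReal.ofReal_mul hII00, ← ENNReal.ofReal_mul hjR.le]
          congr 1
          ring
  have hmain : ENNReal.ofReal (∫ x in C, x ^ j * Real.exp (-x))
      ≤ ENNReal.ofReal ((j:ℝ) * Real.Gamma j * II n L 0) := by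
    rw [← hlhs, key]
    exact hrhs
  have hfact : (j:ℝ) * Real.Gamma j = (j.factorial : ℝ) := by
    obtain ⟨m, rfl⟩ := Nat.exists_eq_add_of_lt hj
    have : ((0 + m + 1 : ℕ):ℝ) = (m:ℝ) + 1 := by push_cast; ring
    rw [this, Real.Gamma_nat_eq_factorial m]
    rw [show (0 + m + 1 : ℕ) = m + 1 by omega, Nat.factorial_succ]
    push_cast
    ring
  rw [hfact] at hmain
  exact (ENNReal.ofReal_le_ofReal_iff (by positivity)).1 hmain

/-- For every `L > 0`, `s ≥ 0` and `k, n ∈ ℕ`, the integral of `f_k` over the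
shifted Cantor iterate `C_n(L) + s + k` is at most the first eigenvalue
`λ₀(C_n(L)) = ∫_{C_n(L)} e^{-r} dr`. -/
theorem shifted_cantor_integral_le_lambda_zero
    (L : ℝ) (hL : 0 < L) (s : ℝ) (hs : 0 ≤ s) (k n : ℕ) :
    (∫ r in (fun x => x + s + k) '' cantorIterate n L,
        r ^ k / (Nat.factorial k) * Real.exp (-r)) ≤
      ∫ r in cantorIterate n L, Real.exp (-r) := by
  have hsub := cantor_subset n L hL.le
  set C := cantorIterate n L with hC
  set a : ℝ := s + (k:ℝ) with ha
  have ha0 : 0 ≤ a := by positivity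
  have hfun : (fun x : ℝ => x + s + k) = (fun x : ℝ => x + a) := by
    funext x; rw [ha]; ring
  rw [hfun]
  have hmp : MeasurePreserving (fun x : ℝ => x + a) volume volume :=
    measurePreserving_add_right volume a
  have hemb : MeasurableEmbedding (fun x : ℝ => x + a) :=
    (MeasurableEquiv.addRight a).measurableEmbedding
  rw [hmp.setIntegral_image_emb hemb]
  have hII0 : II n L 0 = ∫ x in C, Real.exp (-x) := by
    unfold II
    rw [Set.inter_eq_left.2 (fun x hx => Set.mem_Ici.2 ((hsub hx).1))]
  set c : ℕ → ℝ := fun j =>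
    a ^ (k - j) * (k.choose j : ℝ) * Real.exp (-a) / (k.factorial : ℝ) with hc
  have hptwise : ∀ x : ℝ, (x + a) ^ k / (Nat.factorial k) * Real.exp (-(x + a))
      = ∑ j ∈ Finset.range (k + 1), c j * (x ^ j * Real.exp (-x)) := by
    intro x
    rw [show Real.exp (-(x + a)) = Real.exp (-x) * Real.exp (-a) by
        rw [← Real.exp_add]; ring_nf,
      add_pow, Finset.sum_div, Finset.sum_mul]
    apply Finset.sum_congr rfl
    intro j _
    rw [hc]
    ring
  simp_rw [hptwise]
  have hint : ∀ j ∈ Finset.range (k + 1),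
      IntegrableOn (fun x => c j * (x ^ j * Real.exp (-x))) C volume :=
    fun j _ => integrableOn_sub L hsub _ (by fun_prop)
  rw [integral_finset_sum _ hint]
  have hstep : ∀ j ∈ Finset.range (k + 1),
      ∫ x in C, c j * (x ^ j * Real.exp (-x)) ≤ c j * ((j.factorial : ℝ) * II n L 0) := by
    intro j _
    rw [integral_const_mul]
    exact mul_le_mul_of_nonneg_left (moment_bound n L hL j) (by rw [hc]; positivity)
  have hsum := Finset.sum_le_sum hstep
  refine hsum.trans ?_
  have hterm : ∀ j ∈ Finset.range (k + 1),
      c j * ((j.factorial : ℝ) * II n L 0)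
        = (Real.exp (-a) * (a ^ (k - j) / ((k - j).factorial : ℝ))) * II n L 0 := by
    intro j hj
    have hjk : j ≤ k := Nat.lt_succ_iff.1 (Finset.mem_range.1 hj)
    have hcc : ((k.choose j : ℕ) : ℝ) * (j.factorial : ℝ) * (((k - j).factorial : ℕ) : ℝ)
        = (k.factorial : ℝ) := by
      exact_mod_cast congrArg (Nat.cast (R := ℝ))
        (Nat.choose_mul_factorial_mul_factorial hjk)
    rw [hc]
    have h1 : ((k.factorial : ℕ) : ℝ) ≠ 0 := Nat.cast_ne_zero.2 k.factorial_ne_zero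
    have h2 : (((k - j).factorial : ℕ) : ℝ) ≠ 0 := Nat.cast_ne_zero.2 (k - j).factorial_ne_zero
    field_simp
    linear_combination a ^ (k - j) * II n L 0 * hcc
  rw [Finset.sum_congr rfl hterm, ← Finset.sum_mul]
  have hsum1 : ∑ j ∈ Finset.range (k + 1),
      Real.exp (-a) * (a ^ (k - j) / ((k - j).factorial : ℝ)) ≤ 1 := by
    rw [← Finset.mul_sum]
    have hreflect : ∑ j ∈ Finset.range (k + 1), a ^ (k - j) / ((k - j).factorial : ℝ)
        = ∑ m ∈ Finset.range (k + 1), a ^ m / (m.factorial : ℝ) := by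
      have := Finset.sum_range_reflect (fun m => a ^ m / (m.factorial : ℝ)) (k + 1)
      simpa using this
    rw [hreflect]
    have hexp := Real.sum_le_exp_of_nonneg ha0 (k + 1)
    calc Real.exp (-a) * ∑ m ∈ Finset.range (k + 1), a ^ m / (m.factorial : ℝ)
        ≤ Real.exp (-a) * Real.exp a :=
          mul_le_mul_of_nonneg_left hexp (Real.exp_nonneg _)
      _ = 1 := by rw [← Real.exp_add]; simp
  calc (∑ j ∈ Finset.range (k + 1),
          Real.exp (-a) * (a ^ (k - j) / ((k - j).factorial : ℝ))) * II n L 0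
      ≤ 1 * II n L 0 := mul_le_mul_of_nonneg_right hsum1 (II_nonneg n L 0)
    _ = ∫ x in C, Real.exp (-x) := by rw [one_mul, hII0]
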